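/- Every group homomorphism ψ : G₂ → G₂ satisfying ψ(y₁) = y₁⁻¹, ψ(y₂) = y₂⁻¹, ψ(y₃) = y₃⁻¹, ψ(y₄) = y₄⁻¹, and ψ(v) = v·y₃⁻¹ is an involution, i.e. ψ ∘ ψ is the identity map of G₂; in particular, ψ is an automorphism of G₂. -/
import Mathlib


/-- Relator words for the presentation of `G₂`: generators are indexed by `Fin 5`,
with `0,1,2,3` corresponding to `y₁,y₂,y₃,y₄` and `4` to `v`.  The relations are
`v⁻¹·yᵢ·v = wᵢ` written as relators `(v⁻¹·yᵢ·v)·wᵢ⁻¹`. -/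
def G2rels : Set (FreeGroup (Fin 5)) :=
  {((FreeGroup.of 4)⁻¹ * FreeGroup.of 0 * FreeGroup.of 4) *
      (FreeGroup.of 0 * (FreeGroup.of 3)⁻¹ * FreeGroup.of 0 * FreeGroup.of 2)⁻¹,
   ((FreeGroup.of 4)⁻¹ * FreeGroup.of 1 * FreeGroup.of 4) *
      ((FreeGroup.of 2)⁻¹ * FreeGroup.of 1 * FreeGroup.of 2 * FreeGroup.of 0 *
        FreeGroup.of 2 * FreeGroup.of 1)⁻¹,
   ((FreeGroup.of 4)⁻¹ * FreeGroup.of 2 * FreeGroup.of 4) *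
      (FreeGroup.of 1 * FreeGroup.of 2)⁻¹,
   ((FreeGroup.of 4)⁻¹ * FreeGroup.of 3 * FreeGroup.of 4) *
      ((FreeGroup.of 2)⁻¹ * (FreeGroup.of 1)⁻¹ * (FreeGroup.of 1)⁻¹)⁻¹}

/-- The group `G₂ = ⟨y₁,y₂,y₃,y₄,v ∣ v⁻¹·y₁·v = y₁·y₄⁻¹·y₁·y₃,
`v⁻¹·y₂·v = y₃⁻¹·y₂·y₃·y₁·y₃·y₂`, `v⁻¹·y₃·v = y₂·y₃`,
`v⁻¹·y₄·v = y₃⁻¹·y₂⁻¹·y₂⁻¹⟩`. -/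
abbrev G₂ : Type := PresentedGroup G2rels

def y₁ : G₂ := PresentedGroup.of 0
def y₂ : G₂ := PresentedGroup.of 1
def y₃ : G₂ := PresentedGroup.of 2
def y₄ : G₂ := PresentedGroup.of 3
def v : G₂ := PresentedGroup.of 4

/-- Any endomorphism of `G₂` sending `yᵢ ↦ yᵢ⁻¹` and `v ↦ v·y₃⁻¹` is an involution,
hence an automorphism. -/
theorem G2_hom_is_involution (ψ : G₂ →* G₂)
    (h₁ : ψ y₁ = y₁⁻¹) (h₂ : ψ y₂ = y₂⁻¹) (h₃ : ψ y₃ = y₃⁻¹) (h₄ : ψ y₄ = y₄⁻¹)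
    (hv : ψ v = v * y₃⁻¹) :
    (∀ g : G₂, ψ (ψ g) = g) ∧ Function.Bijective ψ := by
  have key : ψ.comp ψ = MonoidHom.id G₂ := by
    apply PresentedGroup.ext
    intro x
    fin_cases x
    · show ψ (ψ y₁) = y₁
      rw [h₁, map_inv, h₁, inv_inv]
    · show ψ (ψ y₂) = y₂
      rw [h₂, map_inv, h₂, inv_inv]
    · show ψ (ψ y₃) = y₃
      rw [h₃, map_inv, h₃, inv_inv]
    · show ψ (ψ y₄) = y₄
      rw [h₄, map_inv, h₄, inv_inv]
    · show ψ (ψ v) = v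
      rw [hv, map_mul, hv, map_inv, h₃, inv_inv]
      group
  have hk : ∀ g : G₂, ψ (ψ g) = g := fun g => DFunLike.congr_fun key g
  exact ⟨hk, Function.bijective_iff_has_inverse.mpr ⟨ψ, hk, hk⟩⟩
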